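/- For every m ∈ ℕ there exists a graph G with a 2-coloring c : V(G) → {r, b} and a non-piercing family 𝓗 of connected subgraphs of G such that tw(G) ≤ m, but every primal support Q (a graph on the blue vertices in which V(H) ∩ b(V) induces a connected subgraph for every H ∈ 𝓗) contains the N × N grid as a subgraph, where N = C(n, ⌊n/2⌋) with n = ⌊m/2⌋; consequently tw(Q) ≥ 2^{⌊m/2⌋}/√m. -/

import Mathlib

open scoped ENNReal

/-- A tree decomposition of a graph `G`: a tree `T` with bags `bag i ⊆ V` such that
every vertex appears in a bag, every edge lies in a bag, and the bags containing a
fixed vertex form a connected subtree. -/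
def IsTreeDecomp {V ι : Type} (G : SimpleGraph V) (T : SimpleGraph ι) (bag : ι → Set V) : Prop :=
  T.IsTree ∧ (∀ v, ∃ i, v ∈ bag i) ∧
    (∀ u v, G.Adj u v → ∃ i, u ∈ bag i ∧ v ∈ bag i) ∧
    (∀ v, (T.induce {i | v ∈ bag i}).Connected)

/-- Width of a tree decomposition: (max bag size) − 1. -/
noncomputable def decompWidth {V ι : Type} (bag : ι → Set V) : ℕ∞ :=
  (⨆ i, (bag i).encard) - 1

/-- Treewidth: the infimum of widths of tree decompositions. -/
noncomputable def treewidth {V : Type} (G : SimpleGraph V) : ℕ∞ :=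
  sInf {w : ℕ∞ | ∃ (ι : Type) (T : SimpleGraph ι) (bag : ι → Set V),
    IsTreeDecomp G T bag ∧ w = decompWidth bag}

/-- A family of vertex sets is non-piercing in `G` if every pairwise difference
(when nonempty) induces a connected subgraph of `G`. -/
def NonPiercing {V : Type} (G : SimpleGraph V) (F : Set (Set V)) : Prop :=
  ∀ H ∈ F, ∀ H' ∈ F, (H \ H').Nonempty → (G.induce (H \ H')).Connected

/-- Outerplanarity via a one-page (circular, non-crossing) layout. -/
def Outerplanar {α : Type} (Q : SimpleGraph α) : Prop :=
  ∃ f : α → ℕ, Function.Injective f ∧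
    ∀ a b c d : α, Q.Adj a b → Q.Adj c d →
      ¬ (f a < f c ∧ f c < f b ∧ f b < f d)

/-- `a, b, c` appear in this (clockwise) cyclic order on the cycle `Fin n`. -/
def Cyc3 {n : ℕ} (a b c : Fin n) : Prop :=
  (a < b ∧ b < c) ∨ (b < c ∧ c < a) ∨ (c < a ∧ a < b)

/-- `a, b, c, d` appear in this (clockwise) cyclic order on the cycle `Fin n`. -/
def Cyc4 {n : ℕ} (a b c d : Fin n) : Prop :=
  (a < b ∧ b < c ∧ c < d) ∨ (b < c ∧ c < d ∧ d < a) ∨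
    (c < d ∧ d < a ∧ a < b) ∨ (d < a ∧ a < b ∧ b < c)

/-- Open arc of vertices strictly between `u` and `v` clockwise. -/
def arcO {n : ℕ} (u v : Fin n) : Set (Fin n) := {w | Cyc3 u w v}

/-- Closed arc of vertices from `u` to `v` clockwise (inclusive). -/
def arcC {n : ℕ} (u v : Fin n) : Set (Fin n) := {u} ∪ {v} ∪ {w | Cyc3 u w v}

/-- The cycle system is `axax`-free. -/
def AxaxFree {n : ℕ} (F : Set (Set (Fin n))) : Prop :=
  ¬ ∃ H ∈ F, ∃ H' ∈ F, ∃ a₁ x₁ a₂ x₂ : Fin n,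
    Cyc4 a₁ x₁ a₂ x₂ ∧ a₁ ∈ H \ H' ∧ a₂ ∈ H \ H' ∧ x₁ ∈ H' ∧ x₂ ∈ H'

/-- The cycle system is `abab`-free. -/
def AbabFree {n : ℕ} (F : Set (Set (Fin n))) : Prop :=
  ¬ ∃ H ∈ F, ∃ H' ∈ F, ∃ a₁ b₁ a₂ b₂ : Fin n,
    Cyc4 a₁ b₁ a₂ b₂ ∧ a₁ ∈ H \ H' ∧ a₂ ∈ H \ H' ∧ b₁ ∈ H' \ H ∧ b₂ ∈ H' \ H

/-- The vertices appearing in bags of the component of `T` minus the edge `{x,y}`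
that contains `x` (the `x`-side of the tree decomposition). -/
def sideVerts {V ι : Type} (T : SimpleGraph ι) (bag : ι → Set V) (x y : ι) : Set V :=
  ⋃ i ∈ {i | (T.deleteEdges {s(x, y)}).Reachable x i}, bag i

/-- Adjacency in the `N × N` grid graph. -/
def gridAdj {N : ℕ} (p q : Fin N × Fin N) : Prop :=
  (p.1 = q.1 ∧ (p.2.val + 1 = q.2.val ∨ q.2.val + 1 = p.2.val)) ∨
    (p.2 = q.2 ∧ (p.1.val + 1 = q.1.val ∨ q.1.val + 1 = p.1.val))

/-- Clockwise distance from `b` to `a` on the cycle `Fin n`. -/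
def relpos {n : ℕ} (a b : Fin n) : ℕ := (a.val + n - b.val) % n

/-- Lexicographic comparison on pairs of naturals. -/
def lexLe (p q : ℕ × ℕ) : Prop := p.1 < q.1 ∨ (p.1 = q.1 ∧ p.2 ≤ q.2)

/-- A set of indices forming a (possibly empty) cyclic interval of `Fin m`. -/
def CycInterval {m : ℕ} (S : Set (Fin m)) : Prop := S = ∅ ∨ ∃ i j : Fin m, S = arcC i j

/-- Maximal elements of a family of sets under inclusion. -/
def maxElems {X : Type} (F : Set (Set X)) : Set (Set X) :=
  {H ∈ F | ∀ H' ∈ F, H ⊆ H' → H = H'}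

namespace Stmt8Aux

open SimpleGraph

lemma connected_induce_subsingleton {α : Type} (G : SimpleGraph α) (S : Set α)
    (hne : S.Nonempty) (hss : S.Subsingleton) : (G.induce S).Connected := by
  rw [connected_iff]
  refine ⟨?_, ⟨⟨hne.choose, hne.choose_spec⟩⟩⟩
  intro x y
  have : x = y := Subtype.ext (hss x.2 y.2)
  exact this ▸ Reachable.refl x

lemma connected_induce_bip {α : Type} (G : SimpleGraph α) (S : Set α)
    (P R : α → Prop)
    (hPR : ∀ x ∈ S, P x ∨ R x)
    (hadj : ∀ x ∈ S, ∀ y ∈ S, P x → R y → G.Adj x y)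
    (hb : ∃ x ∈ S, P x) (hr : ∃ y ∈ S, R y) :
    (G.induce S).Connected := by
  obtain ⟨b0, hb0S, hb0⟩ := hb
  obtain ⟨r0, hr0S, hr0⟩ := hr
  rw [connected_iff]
  refine ⟨?_, ⟨⟨b0, hb0S⟩⟩⟩
  have key : ∀ x : S, (G.induce S).Reachable x ⟨b0, hb0S⟩ := by
    rintro ⟨x, hxS⟩
    rcases hPR x hxS with hx | hx
    · have h1 : (G.induce S).Adj ⟨x, hxS⟩ ⟨r0, hr0S⟩ := hadj x hxS r0 hr0S hx hr0
      have h2 : (G.induce S).Adj ⟨b0, hb0S⟩ ⟨r0, hr0S⟩ := hadj b0 hb0S r0 hr0S hb0 hr0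
      exact h1.reachable.trans h2.reachable.symm
    · have h2 : (G.induce S).Adj ⟨b0, hb0S⟩ ⟨x, hxS⟩ := hadj b0 hb0S x hxS hb0 hx
      exact h2.reachable.symm
  intro x y
  exact (key x).trans (key y).symm

/-- star-shaped connectivity: every non-hub element is adjacent to the hub. -/
lemma connected_induce_hub {α : Type} (G : SimpleGraph α) (S : Set α) (hub : α)
    (hhub : hub ∈ S) (h : ∀ x ∈ S, x ≠ hub → G.Adj x hub) :
    (G.induce S).Connected := by
  rw [connected_iff]
  refine ⟨?_, ⟨⟨hub, hhub⟩⟩⟩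
  have key : ∀ x : S, (G.induce S).Reachable x ⟨hub, hhub⟩ := by
    rintro ⟨x, hxS⟩
    by_cases hx : x = hub
    · exact (Subtype.ext hx : (⟨x, hxS⟩ : S) = ⟨hub, hhub⟩) ▸ Reachable.refl _
    · have : (G.induce S).Adj ⟨x, hxS⟩ ⟨hub, hhub⟩ := h x hxS hx
      exact this.reachable
  intro x y
  exact (key x).trans (key y).symm

lemma walk_in_induce {ι : Type} {T : SimpleGraph ι} {I : Set ι}
    (h : (T.induce I).Connected) {x y : ι} (hx : x ∈ I) (hy : y ∈ I) :
    ∃ w : T.Walk x y, ∀ z ∈ w.support, z ∈ I := by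
  obtain ⟨p⟩ := h.preconnected ⟨x, hx⟩ ⟨y, hy⟩
  let f : T.induce I →g T := ⟨Subtype.val, fun {a b} hab => hab⟩
  refine ⟨p.map f, ?_⟩
  intro z hz
  rw [Walk.support_map] at hz
  obtain ⟨z', _, rfl⟩ := List.mem_map.1 hz
  exact z'.2

lemma exists_first_in_set {ι : Type} {T : SimpleGraph ι} {a b : ι} (p : T.Walk a b)
    (I : Set ι) (hb : b ∈ I) :
    ∃ (j : ι) (q : T.Walk a j), j ∈ I ∧ (∀ z ∈ q.support, z ∈ I → z = j) := by
  induction p with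
  | nil => exact ⟨_, Walk.nil, hb, by simp⟩
  | @cons u v w h p ih =>
    by_cases ha : u ∈ I
    · exact ⟨u, Walk.nil, ha, by simp⟩
    · obtain ⟨j, q, hj, hq⟩ := ih hb
      refine ⟨j, Walk.cons h q, hj, ?_⟩
      intro z hz hzI
      rw [Walk.support_cons] at hz
      rcases List.mem_cons.1 hz with rfl | hz
      · exact absurd hzI ha
      · exact hq z hz hzI

lemma isPath_append_of {ι : Type} {T : SimpleGraph ι} {a b c : ι}
    {p : T.Walk a b} {q : T.Walk b c} (hp : p.IsPath) (hq : q.IsPath)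
    (h : ∀ z, z ∈ p.support → z ∈ q.support → z = b) : (p.append q).IsPath := by
  rw [Walk.isPath_def, Walk.support_append, List.nodup_append]
  refine ⟨hp.support_nodup, hq.support_nodup.tail, ?_⟩
  intro z hz z' hz' hzz
  subst hzz
  have hzq : z ∈ q.support := List.mem_of_mem_tail hz'
  have hzb : z = b := h z hz hzq
  subst hzb
  have hnd := hq.support_nodup
  rw [q.support_eq_cons] at hnd
  exact (List.nodup_cons.1 hnd).1 hz'

/-- Helly property: a finite clique is contained in some bag of any tree decomposition. -/
lemma clique_subset_bag {β ι : Type} {Q : SimpleGraph β} {T : SimpleGraph ι} {bag : ι → Set β}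
    (hd : IsTreeDecomp Q T bag) (W : Finset β)
    (hW : ∀ u ∈ W, ∀ v ∈ W, u ≠ v → Q.Adj u v) :
    ∃ i, (W : Set β) ⊆ bag i := by
  classical
  obtain ⟨htree, hvert, hedge, hconn⟩ := hd
  induction W using Finset.induction_on with
  | empty =>
    obtain ⟨i⟩ := htree.isConnected.nonempty
    exact ⟨i, by simp⟩
  | @insert w W' hw IH =>
    obtain ⟨i0, hi0⟩ := IH (fun u hu v hv huv => hW u (by simp [hu]) v (by simp [hv]) huv)
    by_cases hwi : w ∈ bag i0
    · refine ⟨i0, ?_⟩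
      rw [Finset.coe_insert]
      exact Set.insert_subset hwi hi0
    · set Iw : Set ι := {i | w ∈ bag i} with hIw
      obtain ⟨k0, hk0⟩ := hvert w
      obtain ⟨w0⟩ := htree.isConnected.preconnected i0 k0
      obtain ⟨j, q, hjI, hq⟩ := exists_first_in_set w0 Iw hk0
      set qp := q.bypass with hqp
      have hqp_path : qp.IsPath := q.bypass_isPath
      have hqp_first : ∀ z ∈ qp.support, z ∈ Iw → z = j :=
        fun z hz hzI => hq z (q.support_bypass_subset hz) hzI
      have hjbag : ∀ u ∈ W', u ∈ bag j := by
        intro u hu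
        have huw : u ≠ w := fun huw => hw (huw ▸ hu)
        have hadj : Q.Adj u w := hW u (by simp [hu]) w (by simp) huw
        obtain ⟨k, hk1, hk2⟩ := hedge u w hadj
        have hi0u : i0 ∈ {i | u ∈ bag i} := hi0 (by simpa using hu)
        obtain ⟨r, hr⟩ := walk_in_induce (hconn u) hi0u hk1
        obtain ⟨s, hs⟩ := walk_in_induce (hconn w) hjI hk2
        set rp := r.bypass
        have hrp_path : rp.IsPath := r.bypass_isPath
        have hrp_sub : ∀ z ∈ rp.support, u ∈ bag z :=
          fun z hz => hr z (r.support_bypass_subset hz)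
        set sp := s.bypass
        have hsp_path : sp.IsPath := s.bypass_isPath
        have hsp_sub : ∀ z ∈ sp.support, z ∈ Iw :=
          fun z hz => hs z (s.support_bypass_subset hz)
        have happ : (qp.append sp).IsPath := by
          apply isPath_append_of hqp_path hsp_path
          intro z hz hz'
          exact hqp_first z hz (hsp_sub z hz')
        have hequ := htree.existsUnique_path i0 k
        have heq : qp.append sp = rp := (hequ.unique happ hrp_path)
        have hjmem : j ∈ (qp.append sp).support := by
          rw [Walk.mem_support_append_iff]
          exact Or.inr sp.start_mem_support
        rw [heq] at hjmem
        exact hrp_sub j hjmem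
      refine ⟨j, ?_⟩
      rw [Finset.coe_insert]
      exact Set.insert_subset hjI (fun u hu => hjbag u hu)

end Stmt8Aux

namespace Stmt8Construction
open SimpleGraph

variable (m : ℕ)

def NN : ℕ := Nat.choose (m / 2) (m / 2 / 2)
def tt : ℕ := (2 ^ (m / 2) + Nat.sqrt m - 1) / Nat.sqrt m + 1
def kk : ℕ := max (m / 2) 1
def CC : ℕ := Nat.choose m (kk m)

abbrev BV := (Fin (NN m) × Fin (NN m)) ⊕ Fin (tt m)
abbrev RV := (Fin (m / 2) ⊕ Fin (m / 2)) ⊕ Fin m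
abbrev VV := BV m ⊕ RV m

def gdgB : BV m → Bool := Sum.elim (fun _ => false) (fun _ => true)
def gdgR : RV m → Bool := Sum.elim (fun _ => false) (fun _ => true)
def cc : VV m → Bool := Sum.elim (fun _ => true) (fun _ => false)

def GG : SimpleGraph (VV m) := SimpleGraph.fromRel (fun u v =>
  match u, v with
  | Sum.inl b, Sum.inr r => gdgB m b = gdgR m r
  | _, _ => False)

lemma GG_adj_blue_red {b : BV m} {r : RV m} (h : gdgB m b = gdgR m r) :
    (GG m).Adj (Sum.inl b) (Sum.inr r) := by
  rw [GG, SimpleGraph.fromRel_adj]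
  exact ⟨by simp, Or.inl h⟩

lemma GG_adj_cases {u v : VV m} (h : (GG m).Adj u v) :
    ∃ (b : BV m) (r : RV m), gdgB m b = gdgR m r ∧
      ((u = Sum.inl b ∧ v = Sum.inr r) ∨ (u = Sum.inr r ∧ v = Sum.inl b)) := by
  rw [GG, SimpleGraph.fromRel_adj] at h
  obtain ⟨-, h⟩ := h
  rcases u with b | r <;> rcases v with b' | r'
  · rcases h with h | h <;> exact absurd h not_false
  · rcases h with h | h
    · exact ⟨b, r', h, Or.inl ⟨rfl, rfl⟩⟩
    · exact absurd h not_false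
  · rcases h with h | h
    · exact absurd h not_false
    · exact ⟨b', r, h, Or.inr ⟨rfl, rfl⟩⟩
  · rcases h with h | h <;> exact absurd h not_false

lemma card_aux1 : Fintype.card {s : Finset (Fin (m / 2)) // s.card = m / 2 / 2} = NN m := by
  rw [Fintype.card_finset_len, Fintype.card_fin]
  rfl

noncomputable def eL : Fin (NN m) → {s : Finset (Fin (m / 2)) // s.card = m / 2 / 2} :=
  (Fintype.equivFinOfCardEq (card_aux1 m)).symm

noncomputable def aL : Fin (NN m) → Finset (Fin (m / 2)) := fun i => (eL m i).1

lemma aL_card (i : Fin (NN m)) : (aL m i).card = m / 2 / 2 := (eL m i).2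

lemma aL_diff {i j : Fin (NN m)} (h : i ≠ j) : ∃ x ∈ aL m i, x ∉ aL m j := by
  have hne : aL m i ≠ aL m j := by
    intro he
    exact h ((Equiv.injective _ ) (Subtype.ext he : eL m i = eL m j))
  by_contra h'
  push_neg at h'
  exact hne (Finset.eq_of_subset_of_card_le h' (by rw [aL_card, aL_card]))

lemma card_aux2 : Fintype.card {s : Finset (Fin m) // s.card = kk m} = CC m := by
  rw [Fintype.card_finset_len, Fintype.card_fin]
  rfl

noncomputable def eC : Fin (CC m) → {s : Finset (Fin m) // s.card = kk m} :=
  (Fintype.equivFinOfCardEq (card_aux2 m)).symm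

noncomputable def aC : ℕ → Finset (Fin m) := fun u =>
  if h : u < CC m then (eC m ⟨u, h⟩).1 else ∅

lemma aC_card {u : ℕ} (h : u < CC m) : (aC m u).card = kk m := by
  rw [aC, dif_pos h]; exact (eC m ⟨u, h⟩).2

lemma aC_diff {u u' : ℕ} (hu : u < CC m) (hu' : u' < CC m) (h : u ≠ u') :
    ∃ x ∈ aC m u, x ∉ aC m u' := by
  have hne : aC m u ≠ aC m u' := by
    intro he
    rw [aC, dif_pos hu, aC, dif_pos hu'] at he
    have := (Equiv.injective _) (Subtype.ext he : eC m ⟨u, hu⟩ = eC m ⟨u', hu'⟩)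
    exact h (by simpa [Fin.ext_iff] using this)
  by_contra h'
  push_neg at h'
  exact hne (Finset.eq_of_subset_of_card_le h' (by rw [aC_card m hu, aC_card m hu']))

def gb : Fin (NN m) × Fin (NN m) → VV m := fun p => Sum.inl (Sum.inl p)
def cb : Fin (tt m) → VV m := fun u => Sum.inl (Sum.inr u)
def grL : Fin (m / 2) → VV m := fun r => Sum.inr (Sum.inl (Sum.inl r))
def grR : Fin (m / 2) → VV m := fun r => Sum.inr (Sum.inl (Sum.inr r))
def crd : Fin m → VV m := fun r => Sum.inr (Sum.inr r)

def gridSucc (p q : Fin (NN m) × Fin (NN m)) : Prop :=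
  (p.1 = q.1 ∧ (p.2 : ℕ) + 1 = q.2) ∨ (p.2 = q.2 ∧ (p.1 : ℕ) + 1 = q.1)

def HGrid (p q : Fin (NN m) × Fin (NN m)) : Set (VV m) :=
  {gb m p, gb m q} ∪ grL m '' ↑(aL m p.1) ∪ grR m '' ↑(aL m p.2)

def HCl (u v : Fin (tt m)) : Set (VV m) :=
  {cb m u, cb m v} ∪ crd m '' ↑(aC m u)

def HH : Set (Set (VV m)) :=
  {H | (∃ p q, gridSucc m p q ∧ H = HGrid m p q) ∨
       (∃ u v : Fin (tt m), (u : ℕ) < (v : ℕ) ∧ H = HCl m u v)}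

/-! arithmetic -/

lemma two_pow_le_centralBinom (j : ℕ) : 2 ^ j ≤ Nat.centralBinom j := by
  induction j with
  | zero => simp [Nat.centralBinom_zero]
  | succ j ih =>
    have h := Nat.succ_mul_centralBinom_succ j
    have h2 : 2 * Nat.centralBinom j ≤ Nat.centralBinom (j + 1) := by
      have hle : (j + 1) * (2 * Nat.centralBinom j) ≤ (j + 1) * Nat.centralBinom (j + 1) := by
        rw [h]
        have : (j + 1) * (2 * Nat.centralBinom j) ≤ (2 * j + 1) * (2 * Nat.centralBinom j) := by
          apply Nat.mul_le_mul_right; omega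
        calc (j + 1) * (2 * Nat.centralBinom j) ≤ (2 * j + 1) * (2 * Nat.centralBinom j) := this
          _ = 2 * (2 * j + 1) * Nat.centralBinom j := by ring
      exact Nat.le_of_mul_le_mul_left hle (Nat.succ_pos j)
    calc 2 ^ (j + 1) = 2 * 2 ^ j := by ring
      _ ≤ 2 * Nat.centralBinom j := by omega
      _ ≤ _ := h2

lemma two_pow_half_le_CC (h : 1 ≤ m) : 2 ^ (m / 2) ≤ CC m := by
  rcases Nat.lt_or_ge m 2 with h2 | h2
  · have : m = 1 := by omega
    subst this
    simp [CC, kk]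
  · have hk : kk m = m / 2 := by
      rw [kk]; have : 1 ≤ m / 2 := by omega
      omega
    rw [CC, hk]
    have h1 : Nat.centralBinom (m / 2) ≤ Nat.choose m (m / 2) := by
      rw [Nat.centralBinom_eq_two_mul_choose]
      exact Nat.choose_le_choose _ (by omega)
    exact le_trans (two_pow_le_centralBinom (m / 2)) h1

lemma tt_sub_one_le_CC (h : 1 ≤ m) : tt m - 1 ≤ CC m := by
  have hs : 0 < Nat.sqrt m := Nat.sqrt_pos.2 h
  have hq : (2 ^ (m / 2) + Nat.sqrt m - 1) / Nat.sqrt m ≤ 2 ^ (m / 2) := by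
    rw [Nat.div_le_iff_le_mul_add_pred hs]
    have h1 : 1 ≤ 2 ^ (m / 2) := Nat.one_le_two_pow
    have h2 : 2 ^ (m / 2) ≤ Nat.sqrt m * 2 ^ (m / 2) := Nat.le_mul_of_pos_left _ hs
    omega
  have : tt m - 1 = (2 ^ (m / 2) + Nat.sqrt m - 1) / Nat.sqrt m := by rw [tt, Nat.add_sub_cancel]
  rw [this]
  exact le_trans hq (two_pow_half_le_CC m h)

lemma two_pow_le_sqrt_mul (h : 1 ≤ m) : 2 ^ (m / 2) ≤ Nat.sqrt m * (tt m - 1) := by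
  have hs : 0 < Nat.sqrt m := Nat.sqrt_pos.2 h
  have htt : tt m - 1 = (2 ^ (m / 2) + Nat.sqrt m - 1) / Nat.sqrt m := by rw [tt, Nat.add_sub_cancel]
  rw [htt]
  have h1 := Nat.div_add_mod (2 ^ (m / 2) + Nat.sqrt m - 1) (Nat.sqrt m)
  have h2 : (2 ^ (m / 2) + Nat.sqrt m - 1) % Nat.sqrt m < Nat.sqrt m :=
    Nat.mod_lt _ hs
  have h3 : 1 ≤ 2 ^ (m / 2) := Nat.one_le_two_pow
  omega

lemma real_bound (h : 1 ≤ m) :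
    (2 : ℝ) ^ (m / 2) / Real.sqrt m ≤ ((tt m - 1 : ℕ) : ℝ) := by
  have hs : 0 < Nat.sqrt m := Nat.sqrt_pos.2 h
  have hsR : (Nat.sqrt m : ℝ) ≤ Real.sqrt m := by
    rw [show ((m : ℝ)) = ((m : ℕ) : ℝ) from rfl]
    apply Real.le_sqrt_of_sq_le
    have : (Nat.sqrt m) ^ 2 ≤ m := Nat.sqrt_le' m
    exact_mod_cast this
  have hq : (2 : ℝ) ^ (m / 2) ≤ (Nat.sqrt m : ℝ) * ((tt m - 1 : ℕ) : ℝ) := by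
    have := two_pow_le_sqrt_mul m h
    exact_mod_cast this
  have hsqrtpos : 0 < Real.sqrt m := Real.sqrt_pos.2 (by exact_mod_cast h)
  rw [div_le_iff₀ hsqrtpos]
  calc (2 : ℝ) ^ (m / 2) ≤ (Nat.sqrt m : ℝ) * ((tt m - 1 : ℕ) : ℝ) := hq
    _ ≤ Real.sqrt m * ((tt m - 1 : ℕ) : ℝ) := by
        apply mul_le_mul_of_nonneg_right hsR (by positivity)
    _ = ((tt m - 1 : ℕ) : ℝ) * Real.sqrt m := by ring

lemma min_lt_CC {u v : Fin (tt m)} (h : (u : ℕ) < (v : ℕ)) : (u : ℕ) < CC m := by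
  rcases Nat.eq_zero_or_pos m with hm | hm
  · subst hm
    have hu := u.isLt
    have hv := v.isLt
    have : tt 0 = 1 := by rfl
    omega
  · have := tt_sub_one_le_CC m hm
    have hv := v.isLt
    omega

lemma NN_pos : 1 ≤ NN m := Nat.choose_pos (Nat.div_le_self _ _)

lemma labcard_pos (h : 2 ≤ NN m) : 1 ≤ m / 2 / 2 := by
  by_contra h0
  push_neg at h0
  have h1 : m / 2 / 2 = 0 := by omega
  have h2 : m / 2 = 0 ∨ m / 2 = 1 := by omega
  have : NN m = 1 := by
    rcases h2 with h2 | h2 <;> rw [NN, h1, h2] <;> rfl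
  omega

lemma kk_pos : 1 ≤ kk m := le_max_right _ _

lemma tt_pos : 1 ≤ tt m := Nat.le_add_left _ _

end Stmt8Construction

namespace Stmt8TD
open SimpleGraph Stmt8Construction

variable (m : ℕ)

abbrev II := BV m ⊕ Bool

def TT : SimpleGraph (II m) := SimpleGraph.fromRel (fun x y =>
  match x, y with
  | Sum.inl b, Sum.inr g => gdgB m b = g
  | Sum.inr _, Sum.inr _ => True
  | _, _ => False)

lemma TT_adj_leaf {b : BV m} {g : Bool} (h : gdgB m b = g) :
    (TT m).Adj (Sum.inl b) (Sum.inr g) := by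
  rw [TT, fromRel_adj]
  exact ⟨by simp, Or.inl h⟩

lemma TT_adj_centers : (TT m).Adj (Sum.inr true) (Sum.inr false) := by
  rw [TT, fromRel_adj]
  exact ⟨by simp, Or.inl trivial⟩

lemma TT_leaf_nbr {b : BV m} {x : II m} (h : (TT m).Adj (Sum.inl b) x) :
    x = Sum.inr (gdgB m b) := by
  rw [TT, fromRel_adj] at h
  obtain ⟨-, h⟩ := h
  rcases x with b' | g
  · rcases h with h | h <;> exact absurd h not_false
  · rcases h with h | h
    · rw [h]
    · exact absurd h not_false

lemma TT_isTree : (TT m).IsTree := by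
  constructor
  · rw [connected_iff]
    refine ⟨?_, ⟨Sum.inr false⟩⟩
    have key : ∀ x : II m, (TT m).Reachable x (Sum.inr false) := by
      intro x
      rcases x with b | g
      · rcases hg : gdgB m b with _ | _
        · exact (TT_adj_leaf m hg).reachable
        · exact ((TT_adj_leaf m hg).reachable).trans (TT_adj_centers m).reachable
      · rcases g with _ | _
        · exact Reachable.refl _
        · exact (TT_adj_centers m).reachable
    intro x y
    exact (key x).trans (key y).symm
  · intro v c hc
    classical
    set l := c.support.tail with hl
    have hnd : l.Nodup := hc.support_nodup
    have hlen : l.length = c.length := by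
      rw [hl, List.length_tail, Walk.length_support]
      omega
    have h3 : 3 ≤ c.length := hc.three_le_length
    have hleaf : ∃ b, Sum.inl b ∈ l := by
      by_contra h0
      push_neg at h0
      have hsub' : l.toFinset ⊆ {Sum.inr false, Sum.inr true} := by
        intro x hx
        rcases x with b | g
        · exact absurd (List.mem_toFinset.1 hx) (h0 b)
        · rcases g with _ | _ <;> simp
      have hcard2 : l.toFinset.card ≤ 2 :=
        le_trans (Finset.card_le_card hsub')
          (le_trans (Finset.card_insert_le _ _) (by simp))
      have := List.toFinset_card_of_nodup hnd
      omega
    obtain ⟨b, hbmem⟩ := hleaf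
    have hbsup : Sum.inl b ∈ c.support := List.mem_of_mem_tail hbmem
    have hc' := hc.rotate hbsup
    set c' := c.rotate (Sum.inl b) hbsup with hc'def
    have hnotnil : ¬ c'.Nil := hc'.not_nil
    obtain ⟨x0, h0, p, hp⟩ := Walk.not_nil_iff.1 hnotnil
    rw [hp, Walk.cons_isCycle_iff] at hc'
    obtain ⟨hp_path, hedge⟩ := hc'
    have hx0 : x0 = Sum.inr (gdgB m b) := TT_leaf_nbr m h0
    have hpnotnil : ¬ p.Nil := by
      intro hn
      exact h0.ne (hn.eq).symm
    have hrevnotnil : ¬ p.reverse.Nil := by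
      rw [Walk.nil_iff_length_eq, Walk.length_reverse]
      rw [Walk.nil_iff_length_eq] at hpnotnil
      exact hpnotnil
    obtain ⟨y, hy, q, hq⟩ := Walk.not_nil_iff.1 hrevnotnil
    have hyc : y = Sum.inr (gdgB m b) := TT_leaf_nbr m hy
    have hmem : s(Sum.inl b, y) ∈ p.reverse.edges := by
      rw [hq, Walk.edges_cons]
      exact List.mem_cons_self
    rw [Walk.edges_reverse, List.mem_reverse] at hmem
    rw [hyc, ← hx0] at hmem
    exact hedge hmem

def redsOf (g : Bool) : Set (VV m) := {x | ∃ r : RV m, x = Sum.inr r ∧ gdgR m r = g}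

def bagG : II m → Set (VV m)
  | Sum.inl b => redsOf m (gdgB m b) ∪ {Sum.inl b}
  | Sum.inr g => redsOf m g

lemma redsOf_eq_false : redsOf m false = Set.range (grL m) ∪ Set.range (grR m) := by
  ext x
  constructor
  · rintro ⟨r, rfl, hr⟩
    rcases r with r | r
    · rcases r with r | r
      · exact Or.inl ⟨r, rfl⟩
      · exact Or.inr ⟨r, rfl⟩
    · exact absurd hr (by simp [gdgR])
  · rintro (⟨r, rfl⟩ | ⟨r, rfl⟩)
    · exact ⟨_, rfl, rfl⟩
    · exact ⟨_, rfl, rfl⟩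

lemma redsOf_eq_true : redsOf m true = Set.range (crd m) := by
  ext x
  constructor
  · rintro ⟨r, rfl, hr⟩
    rcases r with r | r
    · exact absurd hr (by simp [gdgR])
    · exact ⟨r, rfl⟩
  · rintro ⟨r, rfl⟩
    exact ⟨_, rfl, rfl⟩

lemma encard_range_le {k : ℕ} {γ : Type} (f : Fin k → γ) :
    (Set.range f).encard ≤ (k : ℕ∞) := by
  rw [← Set.image_univ]
  refine le_trans (Set.encard_image_le _ _) ?_
  rw [Set.encard_univ]
  simp

lemma encard_redsOf (g : Bool) : (redsOf m g).encard ≤ (m : ℕ∞) := by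
  rcases g with _ | _
  · rw [redsOf_eq_false]
    refine le_trans (Set.encard_union_le _ _) ?_
    refine le_trans (add_le_add (encard_range_le _) (encard_range_le _)) ?_
    rw [← Nat.cast_add]
    exact_mod_cast (by omega : m / 2 + m / 2 ≤ m)
  · rw [redsOf_eq_true]
    exact encard_range_le _

lemma encard_bagG (i : II m) : (bagG m i).encard ≤ (m : ℕ∞) + 1 := by
  rcases i with b | g
  · refine le_trans (Set.encard_union_le _ _) ?_
    rw [Set.encard_singleton]
    exact add_le_add (encard_redsOf m _) le_rfl
  · exact le_trans (encard_redsOf m g) (by simp)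

lemma bagG_decomp : IsTreeDecomp (GG m) (TT m) (bagG m) := by
  refine ⟨TT_isTree m, ?_, ?_, ?_⟩
  · intro v
    rcases v with b | r
    · exact ⟨Sum.inl b, Or.inr rfl⟩
    · exact ⟨Sum.inr (gdgR m r), ⟨r, rfl, rfl⟩⟩
  · intro u v huv
    obtain ⟨b, r, hbr, h | h⟩ := GG_adj_cases m huv
    · obtain ⟨rfl, rfl⟩ := h
      exact ⟨Sum.inl b, Or.inr rfl, Or.inl ⟨r, rfl, hbr.symm⟩⟩
    · obtain ⟨rfl, rfl⟩ := h
      exact ⟨Sum.inl b, Or.inl ⟨r, rfl, hbr.symm⟩, Or.inr rfl⟩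
  · intro v
    rcases v with b | r
    · apply Stmt8Aux.connected_induce_subsingleton
      · exact ⟨Sum.inl b, Or.inr rfl⟩
      · have hmem : ∀ z : II m, Sum.inl b ∈ bagG m z → z = Sum.inl b := by
          intro z hz
          rcases z with b' | g
          · rcases hz with ⟨r, hr, -⟩ | hz
            · exact absurd hr (by simp)
            · simp only [Set.mem_singleton_iff] at hz
              rw [Sum.inl.injEq] at hz
              rw [hz]
          · obtain ⟨r, hr, -⟩ := hz
            exact absurd hr (by simp)
        intro x hx y hy
        rw [hmem x hx, hmem y hy]
    · apply Stmt8Aux.connected_induce_hub (hub := Sum.inr (gdgR m r))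
      · exact ⟨r, rfl, rfl⟩
      · intro x hx hne
        rcases x with b | g
        · rcases hx with ⟨r', hr', hg⟩ | hx
          · rw [Sum.inr.injEq] at hr'
            subst hr'
            exact TT_adj_leaf m hg.symm
          · exact absurd hx (by simp)
        · obtain ⟨r', hr', hg⟩ := hx
          rw [Sum.inr.injEq] at hr'
          subst hr'
          exact absurd (by rw [hg]) hne

end Stmt8TD

namespace Stmt8Main
open SimpleGraph Stmt8Construction Stmt8TD Stmt8Aux

variable (m : ℕ)

lemma treewidth_GG_le : treewidth (GG m) ≤ (m : ℕ∞) := by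
  have hmem : decompWidth (bagG m) ∈ {w : ℕ∞ | ∃ (ι : Type) (T : SimpleGraph ι)
      (bag : ι → Set (VV m)), IsTreeDecomp (GG m) T bag ∧ w = decompWidth bag} :=
    ⟨II m, TT m, bagG m, bagG_decomp m, rfl⟩
  refine le_trans (sInf_le hmem) ?_
  rw [decompWidth]
  have hsup : (⨆ i, (bagG m i).encard) ≤ (m : ℕ∞) + 1 := iSup_le (encard_bagG m)
  refine le_trans (tsub_le_tsub_right hsup 1) ?_
  simp

lemma mem_HGrid {x : VV m} {p q : Fin (NN m) × Fin (NN m)} :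
    x ∈ HGrid m p q ↔ (x = gb m p ∨ x = gb m q) ∨
      (∃ r ∈ aL m p.1, grL m r = x) ∨ (∃ r ∈ aL m p.2, grR m r = x) := by
  simp [HGrid, Set.mem_union, Set.mem_insert_iff, Set.mem_singleton_iff, Set.mem_image,
    or_assoc]

lemma mem_HCl {x : VV m} {u v : Fin (tt m)} :
    x ∈ HCl m u v ↔ (x = cb m u ∨ x = cb m v) ∨ ∃ r ∈ aC m u, crd m r = x := by
  simp [HCl, Set.mem_union, Set.mem_insert_iff, Set.mem_singleton_iff, Set.mem_image]

/-- bipartite-style connectivity inside a gadget `g`. -/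
lemma conn_gadget (g : Bool) (S : Set (VV m))
    (hsub : ∀ x ∈ S, (∃ b, x = Sum.inl b ∧ gdgB m b = g) ∨ (∃ r, x = Sum.inr r ∧ gdgR m r = g))
    (hb : ∃ x ∈ S, ∃ b, x = Sum.inl b ∧ gdgB m b = g)
    (hr : ∃ x ∈ S, ∃ r, x = Sum.inr r ∧ gdgR m r = g) :
    ((GG m).induce S).Connected := by
  apply connected_induce_bip (GG m) S
    (fun x => ∃ b, x = Sum.inl b ∧ gdgB m b = g)
    (fun x => ∃ r, x = Sum.inr r ∧ gdgR m r = g) hsub ?_ hb hr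
  rintro x - y - ⟨b, rfl, hbg⟩ ⟨r, rfl, hrg⟩
  exact GG_adj_blue_red m (by rw [hbg, hrg])

lemma gridSucc_NN {p q : Fin (NN m) × Fin (NN m)} (h : gridSucc m p q) : 2 ≤ NN m := by
  rcases h with ⟨-, h⟩ | ⟨-, h⟩
  · have := q.2.isLt; omega
  · have := q.1.isLt; omega

lemma aL_nonempty {p q : Fin (NN m) × Fin (NN m)} (h : gridSucc m p q) (i : Fin (NN m)) :
    ∃ r, r ∈ aL m i := by
  have h2 := labcard_pos m (gridSucc_NN m h)
  have := aL_card m i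
  have : 0 < (aL m i).card := by omega
  obtain ⟨r, hr⟩ := Finset.card_pos.1 this
  exact ⟨r, hr⟩

lemma aC_nonempty {u : ℕ} (h : u < CC m) : ∃ r, r ∈ aC m u := by
  have := aC_card m h
  have h2 := kk_pos m
  have : 0 < (aC m u).card := by omega
  obtain ⟨r, hr⟩ := Finset.card_pos.1 this
  exact ⟨r, hr⟩

lemma conn_HGrid {p q : Fin (NN m) × Fin (NN m)} (h : gridSucc m p q) :
    ((GG m).induce (HGrid m p q)).Connected := by
  apply conn_gadget m false
  · intro x hx
    rcases (mem_HGrid m).1 hx with (rfl | rfl) | ⟨r, -, rfl⟩ | ⟨r, -, rfl⟩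
    · exact Or.inl ⟨_, rfl, rfl⟩
    · exact Or.inl ⟨_, rfl, rfl⟩
    · exact Or.inr ⟨_, rfl, rfl⟩
    · exact Or.inr ⟨_, rfl, rfl⟩
  · exact ⟨gb m p, (mem_HGrid m).2 (Or.inl (Or.inl rfl)), _, rfl, rfl⟩
  · obtain ⟨r, hr⟩ := aL_nonempty m h p.1
    exact ⟨grL m r, (mem_HGrid m).2 (Or.inr (Or.inl ⟨r, hr, rfl⟩)), _, rfl, rfl⟩

lemma conn_HCl {u v : Fin (tt m)} (h : (u : ℕ) < (v : ℕ)) :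
    ((GG m).induce (HCl m u v)).Connected := by
  apply conn_gadget m true
  · intro x hx
    rcases (mem_HCl m).1 hx with (rfl | rfl) | ⟨r, -, rfl⟩
    · exact Or.inl ⟨_, rfl, rfl⟩
    · exact Or.inl ⟨_, rfl, rfl⟩
    · exact Or.inr ⟨_, rfl, rfl⟩
  · exact ⟨cb m u, (mem_HCl m).2 (Or.inl (Or.inl rfl)), _, rfl, rfl⟩
  · obtain ⟨r, hr⟩ := aC_nonempty m (min_lt_CC m h)
    exact ⟨crd m r, (mem_HCl m).2 (Or.inr ⟨r, hr, rfl⟩), _, rfl, rfl⟩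

lemma HH_connected : ∀ H ∈ HH m, ((GG m).induce H).Connected := by
  rintro H (⟨p, q, hpq, rfl⟩ | ⟨u, v, huv, rfl⟩)
  · exact conn_HGrid m hpq
  · exact conn_HCl m huv

lemma gridSucc_ne {p q : Fin (NN m) × Fin (NN m)} (h : gridSucc m p q) : p ≠ q := by
  rcases h with ⟨-, h⟩ | ⟨-, h⟩ <;>
  · intro he
    rw [he] at h
    omega

lemma gridSucc_antisymm {p q : Fin (NN m) × Fin (NN m)}
    (h : gridSucc m p q) (h' : gridSucc m q p) : False := by
  rcases h with ⟨h1, h2⟩ | ⟨h1, h2⟩ <;> rcases h' with ⟨h1', h2'⟩ | ⟨h1', h2'⟩ <;>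
    first
      | omega
      | (rw [Fin.ext_iff] at h1 h1'; omega)

end Stmt8Main

namespace Stmt8Main
open SimpleGraph Stmt8Construction Stmt8TD Stmt8Aux

variable (m : ℕ)

lemma HH_nonPiercing : NonPiercing (GG m) (HH m) := by
  rintro H (⟨p, q, hsucc, rfl⟩ | ⟨u, v, huv, rfl⟩) H'
    (⟨p', q', hsucc', rfl⟩ | ⟨u', v', huv', rfl⟩) hne
  · -- grid, grid
    by_cases hkey : p = p'
    · subst hkey
      apply connected_induce_subsingleton _ _ hne
      have hx : ∀ x ∈ HGrid m p q \ HGrid m p q', x = gb m q := by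
        rintro x ⟨hx1, hx2⟩
        rcases (mem_HGrid m).1 hx1 with (rfl | rfl) | ⟨r, hr, rfl⟩ | ⟨r, hr, rfl⟩
        · exact absurd ((mem_HGrid m).2 (Or.inl (Or.inl rfl))) hx2
        · rfl
        · exact absurd ((mem_HGrid m).2 (Or.inr (Or.inl ⟨r, hr, rfl⟩))) hx2
        · exact absurd ((mem_HGrid m).2 (Or.inr (Or.inr ⟨r, hr, rfl⟩))) hx2
      intro x hxm y hym
      rw [hx x hxm, hx y hym]
    · apply conn_gadget m false
      · rintro x ⟨hx1, -⟩
        rcases (mem_HGrid m).1 hx1 with (rfl | rfl) | ⟨r, -, rfl⟩ | ⟨r, -, rfl⟩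
        · exact Or.inl ⟨_, rfl, rfl⟩
        · exact Or.inl ⟨_, rfl, rfl⟩
        · exact Or.inr ⟨_, rfl, rfl⟩
        · exact Or.inr ⟨_, rfl, rfl⟩
      · by_cases h1 : gb m p ∈ HGrid m p' q'
        · have hpq' : p = q' := by
            rcases (mem_HGrid m).1 h1 with (h | h) | ⟨r, -, h⟩ | ⟨r, -, h⟩
            · exact absurd (by simpa [gb] using h) hkey
            · simpa [gb] using h
            · simp [gb, grL] at h
            · simp [gb, grR] at h
          have h2 : gb m q ∉ HGrid m p' q' := by
            intro h2
            rcases (mem_HGrid m).1 h2 with (h | h) | ⟨r, -, h⟩ | ⟨r, -, h⟩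
            · have hq : q = p' := by simpa [gb] using h
              rw [← hq, ← hpq'] at hsucc'
              exact gridSucc_antisymm m hsucc hsucc'
            · have hq : q = q' := by simpa [gb] using h
              exact gridSucc_ne m hsucc (hpq'.trans hq.symm)
            · simp [gb, grL] at h
            · simp [gb, grR] at h
          exact ⟨gb m q, ⟨(mem_HGrid m).2 (Or.inl (Or.inr rfl)), h2⟩, _, rfl, rfl⟩
        · exact ⟨gb m p, ⟨(mem_HGrid m).2 (Or.inl (Or.inl rfl)), h1⟩, _, rfl, rfl⟩
      · have hcoord : p.1 ≠ p'.1 ∨ p.2 ≠ p'.2 := by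
          by_contra hc
          push_neg at hc
          exact hkey (Prod.ext hc.1 hc.2)
        rcases hcoord with hc | hc
        · obtain ⟨x, hx1, hx2⟩ := aL_diff m hc
          refine ⟨grL m x, ⟨(mem_HGrid m).2 (Or.inr (Or.inl ⟨x, hx1, rfl⟩)), ?_⟩, _, rfl, rfl⟩
          intro hmem
          rcases (mem_HGrid m).1 hmem with (h | h) | ⟨r, hr, h⟩ | ⟨r, hr, h⟩
          · simp [gb, grL] at h
          · simp [gb, grL] at h
          · have : r = x := by simpa [grL] using h
            subst this
            exact hx2 hr
          · simp [grL, grR] at h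
        · obtain ⟨x, hx1, hx2⟩ := aL_diff m hc
          refine ⟨grR m x, ⟨(mem_HGrid m).2 (Or.inr (Or.inr ⟨x, hx1, rfl⟩)), ?_⟩, _, rfl, rfl⟩
          intro hmem
          rcases (mem_HGrid m).1 hmem with (h | h) | ⟨r, hr, h⟩ | ⟨r, hr, h⟩
          · simp [gb, grR] at h
          · simp [gb, grR] at h
          · simp [grL, grR] at h
          · have : r = x := by simpa [grR] using h
            subst this
            exact hx2 hr
  · -- grid, clique
    have hdiff : HGrid m p q \ HCl m u' v' = HGrid m p q := by
      refine Set.Subset.antisymm Set.diff_subset (fun x hx2 => ⟨hx2, fun hx1 => ?_⟩)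
      rcases (mem_HCl m).1 hx1 with (rfl | rfl) | ⟨r, -, rfl⟩ <;>
        rcases (mem_HGrid m).1 hx2 with (h | h) | ⟨r', -, h⟩ | ⟨r', -, h⟩ <;>
          simp [gb, cb, crd, grL, grR] at h
    rw [hdiff]
    exact conn_HGrid m hsucc
  · -- clique, grid
    have hdiff : HCl m u v \ HGrid m p' q' = HCl m u v := by
      refine Set.Subset.antisymm Set.diff_subset (fun x hx2 => ⟨hx2, fun hx1 => ?_⟩)
      rcases (mem_HGrid m).1 hx1 with (rfl | rfl) | ⟨r, -, rfl⟩ | ⟨r, -, rfl⟩ <;>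
        rcases (mem_HCl m).1 hx2 with (h | h) | ⟨r', -, h⟩ <;>
          simp [gb, cb, crd, grL, grR] at h
    rw [hdiff]
    exact conn_HCl m huv
  · -- clique, clique
    by_cases hkey : (u : ℕ) = (u' : ℕ)
    · have huu : u = u' := Fin.ext hkey
      subst huu
      apply connected_induce_subsingleton _ _ hne
      have hx : ∀ x ∈ HCl m u v \ HCl m u v', x = cb m v := by
        rintro x ⟨hx1, hx2⟩
        rcases (mem_HCl m).1 hx1 with (rfl | rfl) | ⟨r, hr, rfl⟩
        · exact absurd ((mem_HCl m).2 (Or.inl (Or.inl rfl))) hx2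
        · rfl
        · exact absurd ((mem_HCl m).2 (Or.inr ⟨r, hr, rfl⟩)) hx2
      intro x hxm y hym
      rw [hx x hxm, hx y hym]
    · apply conn_gadget m true
      · rintro x ⟨hx1, -⟩
        rcases (mem_HCl m).1 hx1 with (rfl | rfl) | ⟨r, -, rfl⟩
        · exact Or.inl ⟨_, rfl, rfl⟩
        · exact Or.inl ⟨_, rfl, rfl⟩
        · exact Or.inr ⟨_, rfl, rfl⟩
      · by_cases h1 : cb m u ∈ HCl m u' v'
        · have huv' : (u : ℕ) = (v' : ℕ) := by
            rcases (mem_HCl m).1 h1 with (h | h) | ⟨r, -, h⟩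
            · exact absurd (by simpa [cb, Fin.ext_iff] using h) hkey
            · simpa [cb, Fin.ext_iff] using h
            · simp [cb, crd] at h
          have h2 : cb m v ∉ HCl m u' v' := by
            intro h2
            rcases (mem_HCl m).1 h2 with (h | h) | ⟨r, -, h⟩
            · have : (v : ℕ) = (u' : ℕ) := by simpa [cb, Fin.ext_iff] using h
              omega
            · have : (v : ℕ) = (v' : ℕ) := by simpa [cb, Fin.ext_iff] using h
              omega
            · simp [cb, crd] at h
          exact ⟨cb m v, ⟨(mem_HCl m).2 (Or.inl (Or.inr rfl)), h2⟩, _, rfl, rfl⟩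
        · exact ⟨cb m u, ⟨(mem_HCl m).2 (Or.inl (Or.inl rfl)), h1⟩, _, rfl, rfl⟩
      · obtain ⟨x, hx1, hx2⟩ :=
          aC_diff m (min_lt_CC m huv) (min_lt_CC m huv') hkey
        refine ⟨crd m x, ⟨(mem_HCl m).2 (Or.inr ⟨x, hx1, rfl⟩), ?_⟩, _, rfl, rfl⟩
        intro hmem
        rcases (mem_HCl m).1 hmem with (h | h) | ⟨r, hr, h⟩
        · simp [cb, crd] at h
        · simp [cb, crd] at h
        · have : r = x := by simpa [crd] using h
          subst this
          exact hx2 hr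

end Stmt8Main

namespace Stmt8Final
open SimpleGraph Stmt8Construction Stmt8TD Stmt8Aux Stmt8Main

lemma forced_edge {V : Type} {c : V → Bool} (Q : SimpleGraph {v : V // c v = true})
    {H : Set V}
    (hconn : (Q.induce {x : {v : V // c v = true} | (x : V) ∈ H}).Connected)
    {u v : V} (hu : c u = true) (hv : c v = true) (huv : u ≠ v)
    (hmem : ∀ x : {v : V // c v = true}, (x : V) ∈ H → x = ⟨u, hu⟩ ∨ x = ⟨v, hv⟩)
    (hup : u ∈ H) (hvp : v ∈ H) :
    Q.Adj ⟨u, hu⟩ ⟨v, hv⟩ := by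
  set S := {x : {v : V // c v = true} | (x : V) ∈ H} with hS
  have hus : (⟨u, hu⟩ : {v : V // c v = true}) ∈ S := hup
  have hvs : (⟨v, hv⟩ : {v : V // c v = true}) ∈ S := hvp
  obtain ⟨w⟩ := hconn.preconnected ⟨⟨u, hu⟩, hus⟩ ⟨⟨v, hv⟩, hvs⟩
  have hne : (⟨⟨u, hu⟩, hus⟩ : S) ≠ ⟨⟨v, hv⟩, hvs⟩ := by
    intro h
    have h1 := congrArg Subtype.val h
    have h2 := congrArg Subtype.val h1
    exact huv h2
  have hwnotnil : ¬ w.Nil := Walk.not_nil_of_ne hne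
  obtain ⟨x, hadj, p, -⟩ := Walk.not_nil_iff.1 hwnotnil
  have hQ : Q.Adj ⟨u, hu⟩ x.1 := hadj
  rcases hmem x.1 x.2 with hx | hx
  · rw [hx] at hQ
    exact absurd rfl hQ.ne
  · rw [hx] at hQ
    exact hQ

variable (m : ℕ)

lemma trace_HGrid {p q : Fin (NN m) × Fin (NN m)} (x : {v : VV m // cc m v = true})
    (hx : (x : VV m) ∈ HGrid m p q) :
    x = ⟨gb m p, rfl⟩ ∨ x = ⟨gb m q, rfl⟩ := by
  rcases (mem_HGrid m).1 hx with (h | h) | ⟨r, -, h⟩ | ⟨r, -, h⟩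
  · exact Or.inl (Subtype.ext h)
  · exact Or.inr (Subtype.ext h)
  · have := x.2
    rw [← h] at this
    simp [cc, grL] at this
  · have := x.2
    rw [← h] at this
    simp [cc, grR] at this

lemma trace_HCl {u v : Fin (tt m)} (x : {v : VV m // cc m v = true})
    (hx : (x : VV m) ∈ HCl m u v) :
    x = ⟨cb m u, rfl⟩ ∨ x = ⟨cb m v, rfl⟩ := by
  rcases (mem_HCl m).1 hx with (h | h) | ⟨r, -, h⟩
  · exact Or.inl (Subtype.ext h)
  · exact Or.inr (Subtype.ext h)
  · have := x.2
    rw [← h] at this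
    simp [cc, crd] at this

variable {Q : SimpleGraph {v : VV m // cc m v = true}}

lemma clique_forced
    (hQ : ∀ H ∈ HH m, (H ∩ {v | cc m v = true}).Nonempty →
      (Q.induce {x : {v : VV m // cc m v = true} | (x : VV m) ∈ H}).Connected)
    {u v : Fin (tt m)} (h : u ≠ v) :
    Q.Adj ⟨cb m u, rfl⟩ ⟨cb m v, rfl⟩ := by
  rcases Nat.lt_or_ge (u : ℕ) (v : ℕ) with hlt | hge
  · have hmemH : HCl m u v ∈ HH m := Or.inr ⟨u, v, hlt, rfl⟩
    have hconn := hQ _ hmemH ⟨cb m u, (mem_HCl m).2 (Or.inl (Or.inl rfl)), rfl⟩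
    exact forced_edge Q hconn (u := cb m u) (v := cb m v) rfl rfl
      (by
        intro hh
        have h2 : u = v := by simpa [cb] using hh
        subst h2
        omega)
      (trace_HCl m) ((mem_HCl m).2 (Or.inl (Or.inl rfl)))
      ((mem_HCl m).2 (Or.inl (Or.inr rfl)))
  · have hlt : (v : ℕ) < (u : ℕ) := by
      have hne : (u : ℕ) ≠ (v : ℕ) := fun hh => h (Fin.ext hh)
      omega
    have hmemH : HCl m v u ∈ HH m := Or.inr ⟨v, u, hlt, rfl⟩
    have hconn := hQ _ hmemH ⟨cb m v, (mem_HCl m).2 (Or.inl (Or.inl rfl)), rfl⟩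
    exact (forced_edge Q hconn (u := cb m v) (v := cb m u) rfl rfl
      (by
        intro hh
        have h2 : v = u := by simpa [cb] using hh
        subst h2
        omega)
      (trace_HCl m) ((mem_HCl m).2 (Or.inl (Or.inl rfl)))
      ((mem_HCl m).2 (Or.inl (Or.inr rfl)))).symm

lemma grid_forced
    (hQ : ∀ H ∈ HH m, (H ∩ {v | cc m v = true}).Nonempty →
      (Q.induce {x : {v : VV m // cc m v = true} | (x : VV m) ∈ H}).Connected)
    {p q : Fin (NN m) × Fin (NN m)} (h : gridSucc m p q) :
    Q.Adj ⟨gb m p, rfl⟩ ⟨gb m q, rfl⟩ := by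
  have hmemH : HGrid m p q ∈ HH m := Or.inl ⟨p, q, h, rfl⟩
  have hconn := hQ _ hmemH ⟨gb m p, (mem_HGrid m).2 (Or.inl (Or.inl rfl)), rfl⟩
  exact forced_edge Q hconn (u := gb m p) (v := gb m q) rfl rfl
    (by intro hh; exact gridSucc_ne m h (by simpa [gb] using hh))
    (trace_HGrid m) ((mem_HGrid m).2 (Or.inl (Or.inl rfl)))
    ((mem_HGrid m).2 (Or.inl (Or.inr rfl)))

lemma tw_Q_ge
    (hQ : ∀ H ∈ HH m, (H ∩ {v | cc m v = true}).Nonempty →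
      (Q.induce {x : {v : VV m // cc m v = true} | (x : VV m) ∈ H}).Connected) :
    (tt m : ℕ∞) - 1 ≤ treewidth Q := by
  apply le_sInf
  rintro w ⟨ι, T, bag, hdec, rfl⟩
  classical
  set W : Finset {v : VV m // cc m v = true} :=
    Finset.image (fun u : Fin (tt m) => ⟨cb m u, rfl⟩) Finset.univ with hW
  have hinj : Function.Injective (fun u : Fin (tt m) => (⟨cb m u, rfl⟩ : {v : VV m // cc m v = true})) := by
    intro a b hab
    have : cb m a = cb m b := congrArg Subtype.val hab
    simpa [cb] using this
  have hWcard : W.card = tt m := by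
    rw [hW, Finset.card_image_of_injective _ hinj, Finset.card_univ, Fintype.card_fin]
  have hclique : ∀ x ∈ W, ∀ y ∈ W, x ≠ y → Q.Adj x y := by
    intro x hx y hy hxy
    rw [hW, Finset.mem_image] at hx hy
    obtain ⟨a, -, rfl⟩ := hx
    obtain ⟨b, -, rfl⟩ := hy
    have hab : a ≠ b := fun hab => hxy (by rw [hab])
    exact clique_forced m hQ hab
  obtain ⟨i, hi⟩ := clique_subset_bag hdec W hclique
  have hcard : (tt m : ℕ∞) ≤ (bag i).encard := by
    calc (tt m : ℕ∞) = (W.card : ℕ∞) := by rw [hWcard]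
      _ = (↑W : Set {v : VV m // cc m v = true}).encard := (Set.encard_coe_eq_coe_finsetCard W).symm
      _ ≤ _ := Set.encard_le_encard hi
  exact tsub_le_tsub_right (le_trans hcard (le_iSup (fun i => (bag i).encard) i)) 1

end Stmt8Final

theorem stmt8 (m : ℕ) :
    ∃ (V : Type) (G : SimpleGraph V) (c : V → Bool) (𝓗 : Set (Set V)),
      (∀ H ∈ 𝓗, (G.induce H).Connected) ∧ NonPiercing G 𝓗 ∧
      treewidth G ≤ (m : ℕ∞) ∧
      ∀ Q : SimpleGraph {v : V // c v = true},
        (∀ H ∈ 𝓗, (H ∩ {v | c v = true}).Nonempty →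
          (Q.induce {v : {v : V // c v = true} | (v : V) ∈ H}).Connected) →
        (∃ f : Fin (Nat.choose (m / 2) (m / 2 / 2)) × Fin (Nat.choose (m / 2) (m / 2 / 2)) →
            {v : V // c v = true},
          Function.Injective f ∧ ∀ p q, gridAdj p q → Q.Adj (f p) (f q)) ∧
        ENNReal.ofReal ((2 : ℝ) ^ (m / 2) / Real.sqrt m) ≤ (treewidth Q : ℝ≥0∞) := by
  classical
  refine ⟨Stmt8Construction.VV m, Stmt8Construction.GG m, Stmt8Construction.cc m,
    Stmt8Construction.HH m, Stmt8Main.HH_connected m, Stmt8Main.HH_nonPiercing m,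
    Stmt8Main.treewidth_GG_le m, ?_⟩
  intro Q hQ
  constructor
  · refine ⟨fun p => ⟨Stmt8Construction.gb m p, rfl⟩, ?_, ?_⟩
    · intro a b hab
      have h1 : Stmt8Construction.gb m a = Stmt8Construction.gb m b :=
        congrArg Subtype.val hab
      exact Sum.inl_injective (Sum.inl_injective h1)
    · intro p q hpq
      rcases hpq with ⟨h1, h2 | h2⟩ | ⟨h1, h2 | h2⟩
      · exact Stmt8Final.grid_forced m hQ (Or.inl ⟨h1, h2⟩)
      · exact (Stmt8Final.grid_forced m hQ (Or.inl ⟨h1.symm, h2⟩)).symm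
      · exact Stmt8Final.grid_forced m hQ (Or.inr ⟨h1, h2⟩)
      · exact (Stmt8Final.grid_forced m hQ (Or.inr ⟨h1.symm, h2⟩)).symm
  · rcases Nat.eq_zero_or_pos m with hm | hm
    · subst hm
      simp
    · have h1 := Stmt8Construction.real_bound m hm
      have h2 := Stmt8Final.tw_Q_ge m hQ
      calc ENNReal.ofReal ((2 : ℝ) ^ (m / 2) / Real.sqrt m)
          ≤ ENNReal.ofReal ((Stmt8Construction.tt m - 1 : ℕ) : ℝ) :=
            ENNReal.ofReal_le_ofReal h1
        _ = ((Stmt8Construction.tt m - 1 : ℕ) : ℝ≥0∞) := ENNReal.ofReal_natCast _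
        _ = (((Stmt8Construction.tt m - 1 : ℕ) : ℕ∞) : ℝ≥0∞) := by
            rw [ENat.toENNReal_coe]
        _ ≤ ((treewidth Q : ℕ∞) : ℝ≥0∞) := by
            apply ENat.toENNReal_le.2
            calc ((Stmt8Construction.tt m - 1 : ℕ) : ℕ∞)
                = (Stmt8Construction.tt m : ℕ∞) - 1 := by
                  rw [ENat.coe_sub]
                  rfl
              _ ≤ treewidth Q := h2
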